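/- The set {(p, w) ∈ ℝ² : p ≥ N₀·(2^(r/w) − 1)/|h|², w > 0} of power-bandwidth pairs achieving Shannon rate at least r > 0 is a convex subset of ℝ², given N₀ > 0 and |h| > 0. -/

import Mathlib

/-- The set of power-bandwidth pairs achieving Shannon rate at least `r > 0`
is convex. -/
theorem stmt6 (r h N₀ : ℝ) (hr : 0 < r) (hh : 0 < |h|) (hN : 0 < N₀) :
    Convex ℝ {pw : ℝ × ℝ |
      N₀ * ((2 : ℝ) ^ (r / pw.2) - 1) / |h| ^ 2 ≤ pw.1 ∧ 0 < pw.2} := by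
  set c : ℝ := r * Real.log 2 with hc_def
  have hc : (0 : ℝ) ≤ c := by
    have : (0:ℝ) < Real.log 2 := Real.log_pos (by norm_num)
    positivity
  have hinv : ConvexOn ℝ (Set.Ioi 0) (fun w : ℝ => w⁻¹) := by
    have := convexOn_zpow (𝕜 := ℝ) (-1)
    simpa [zpow_neg_one] using this
  have hlin : ConvexOn ℝ (Set.Ioi 0) (fun w : ℝ => c • w⁻¹) := hinv.smul hc
  have hexp : ConvexOn ℝ (Set.Ioi 0) (fun w : ℝ => Real.exp (c * w⁻¹)) := by
    refine ⟨convex_Ioi 0, fun x hx y hy a b ha hb hab => ?_⟩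
    have h1 := hlin.2 hx hy ha hb hab
    calc Real.exp (c * (a • x + b • y)⁻¹)
        ≤ Real.exp (a • (c * x⁻¹) + b • (c * y⁻¹)) := by
          exact Real.exp_le_exp.2 (by simpa using h1)
      _ ≤ a • Real.exp (c * x⁻¹) + b • Real.exp (c * y⁻¹) :=
          convexOn_exp.2 (Set.mem_univ _) (Set.mem_univ _) ha hb hab
  have hK : (0:ℝ) ≤ N₀ / |h| ^ 2 := by positivity
  have hg : ConvexOn ℝ (Set.Ioi 0)
      (fun w : ℝ => N₀ * ((2 : ℝ) ^ (r / w) - 1) / |h| ^ 2) := by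
    have := (hexp.smul hK).add_const (-(N₀ / |h| ^ 2))
    convert this using 1
    case e'_4 => rfl
    case e'_10 => rfl
    funext w
    rw [Real.rpow_def_of_pos (by norm_num : (0:ℝ) < 2)]
    rw [hc_def]
    have : Real.log 2 * (r / w) = r * Real.log 2 * w⁻¹ := by
      rw [div_eq_mul_inv]; ring
    rw [this]
    simp only [Pi.add_apply, smul_eq_mul]
    ring
  intro x hx y hy a b ha hb hab
  obtain ⟨hx1, hx2⟩ := hx
  obtain ⟨hy1, hy2⟩ := hy
  have hmem := hg.1 (Set.mem_Ioi.2 hx2) (Set.mem_Ioi.2 hy2) ha hb hab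
  have hval := hg.2 (Set.mem_Ioi.2 hx2) (Set.mem_Ioi.2 hy2) ha hb hab
  refine ⟨?_, by simpa using hmem⟩
  have h2 : (a • x + b • y).2 = a • x.2 + b • y.2 := rfl
  have h1' : (a • x + b • y).1 = a • x.1 + b • y.1 := rfl
  calc N₀ * ((2 : ℝ) ^ (r / (a • x + b • y).2) - 1) / |h| ^ 2
      ≤ a • (N₀ * ((2 : ℝ) ^ (r / x.2) - 1) / |h| ^ 2)
        + b • (N₀ * ((2 : ℝ) ^ (r / y.2) - 1) / |h| ^ 2) := by rw [h2]; exact hval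
    _ ≤ (a • x + b • y).1 := by
        rw [h1']; simp only [smul_eq_mul]
        have := mul_le_mul_of_nonneg_left hx1 ha
        have := mul_le_mul_of_nonneg_left hy1 hb
        linarith
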